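/- Let A and B be disjoint sets of size m, let 0 < d ≤ m, and let G be the random bipartite graph on A ∪ B where each pair (a,b) ∈ A × B is an edge independently with probability p = d/m. Then the probability that there exist subsets X ⊆ A and Y ⊆ B with |X|·|Y| ≥ 3m²/d and no edge between X and Y is at most 2^{-m}. -/

import Mathlib

open MeasureTheory ENNReal

lemma realbound (m : ℕ) (hm : 0 < m) (d : ℝ) (hd : 0 < d) (hdm : d ≤ m)
    (k : ℕ) (hk : 3 * (m : ℝ) ^ 2 / d ≤ k) :
    (1 - d / m) ^ k ≤ ((8 : ℝ))⁻¹ ^ m := by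
  have hm' : (0 : ℝ) < m := by exact_mod_cast hm
  have hq0 : 0 < d / m := div_pos hd hm'
  have hq1 : d / m ≤ 1 := (div_le_one hm').mpr hdm
  have h1 : (1 - d / m) ^ k ≤ Real.exp (-(d / m)) ^ k := by
    apply pow_le_pow_left₀ (by linarith)
    have := Real.add_one_le_exp (-(d / m))
    linarith
  have h2 : Real.exp (-(d / m)) ^ k = Real.exp (-(d / m * k)) := by
    rw [← Real.exp_nat_mul]; ring_nf
  have hk3 : 3 * (m : ℝ) ≤ d / m * k := by
    have : 3 * (m : ℝ) ^ 2 / d * (d / m) ≤ (k : ℝ) * (d / m) := by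
      apply mul_le_mul_of_nonneg_right hk hq0.le
    calc 3 * (m : ℝ) = 3 * (m : ℝ) ^ 2 / d * (d / m) := by
          field_simp
      _ ≤ (k : ℝ) * (d / m) := this
      _ = d / m * k := by ring
  have h3 : Real.exp (-(d / m * k)) ≤ Real.exp (-(3 * m)) :=
    Real.exp_le_exp.mpr (by linarith)
  have h4 : Real.exp (-(3 * m)) = Real.exp (-3) ^ m := by
    rw [← Real.exp_nat_mul]; ring_nf
  have h5 : Real.exp (-3) ≤ (8 : ℝ)⁻¹ := by
    rw [Real.exp_neg, inv_le_inv₀ (Real.exp_pos 3) (by norm_num)]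
    have h := Real.exp_one_gt_d9
    calc (8 : ℝ) ≤ 2.7182818283 ^ 3 := by norm_num
      _ ≤ Real.exp 1 ^ 3 := by
          exact pow_le_pow_left₀ (by norm_num) h.le 3
      _ = Real.exp 3 := by
          rw [← Real.exp_nat_mul]; norm_num
  calc (1 - d / m) ^ k ≤ Real.exp (-(d / m)) ^ k := h1
    _ = Real.exp (-(d / m * k)) := h2
    _ ≤ Real.exp (-(3 * m)) := h3
    _ = Real.exp (-3) ^ m := h4
    _ ≤ (8 : ℝ)⁻¹ ^ m := pow_le_pow_left₀ (Real.exp_pos _).le h5 m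

/-- Random bipartite graph between `A = Fin m` (left) and `B = Fin m` (right):
each cross pair is an edge independently with probability `p = d/m`.  The
probability that there are `X ⊆ A`, `Y ⊆ B` with `|X|·|Y| ≥ 3m²/d` and no edge
between `X` and `Y` is at most `2^{-m}`. -/
theorem stmt5 (m : ℕ) (hm : 0 < m) (d : ℝ) (hd : 0 < d) (hdm : d ≤ m)
    (p : ℝ≥0∞) (hp1 : p ≤ 1) (hp : p = ENNReal.ofReal (d / m)) :
    (Measure.pi fun _ : Fin m × Fin m => (PMF.bernoulli p.toNNReal
        (by simpa using ENNReal.toNNReal_mono ENNReal.one_ne_top hp1)).toMeasure)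
      {ω : Fin m × Fin m → Bool |
        ∃ X Y : Finset (Fin m),
          3 * (m : ℝ) ^ 2 / d ≤ (X.card : ℝ) * (Y.card : ℝ) ∧
          ∀ x ∈ X, ∀ y ∈ Y, ω (x, y) = false}
      ≤ 2⁻¹ ^ m := by
  have hm' : (0 : ℝ) < m := by exact_mod_cast hm
  set ν := (PMF.bernoulli p.toNNReal
        (by simpa using ENNReal.toNNReal_mono ENNReal.one_ne_top hp1)).toMeasure with hν
  set μ := Measure.pi fun _ : Fin m × Fin m => ν with hμ
  have hνf : ν {false} = 1 - p := by
    rw [hν, PMF.toMeasure_apply_singleton _ _ (measurableSet_singleton _)]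
    refine (PMF.bernoulli_apply _ false).trans ?_
    simp [ENNReal.coe_sub, ENNReal.coe_toNNReal (ne_top_of_le_ne_top one_ne_top hp1)]
  -- measure of a cylinder
  have cyl : ∀ s : Finset (Fin m × Fin m),
      μ {ω : Fin m × Fin m → Bool | ∀ i ∈ s, ω i = false} = (1 - p) ^ s.card := by
    intro s
    have hset : {ω : Fin m × Fin m → Bool | ∀ i ∈ s, ω i = false}
        = Set.univ.pi (fun i => if i ∈ s then ({false} : Set Bool) else Set.univ) := by
      ext ω
      simp only [Set.mem_setOf_eq, Set.mem_pi, Set.mem_univ, true_implies]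
      constructor
      · intro h i
        by_cases hi : i ∈ s <;> simp [hi, h i]
      · intro h i hi
        have := h i; simpa [hi] using this
    rw [hset, hμ, Measure.pi_pi]
    calc ∏ i : Fin m × Fin m, ν (if i ∈ s then ({false} : Set Bool) else Set.univ)
        = ∏ i : Fin m × Fin m, (if i ∈ s then (1 - p) else 1) := by
          apply Finset.prod_congr rfl
          intro i _
          by_cases hi : i ∈ s
          · rw [if_pos hi, if_pos hi, hνf]
          · rw [if_neg hi, if_neg hi, measure_univ]
      _ = ∏ i ∈ Finset.univ ∩ s, (1 - p) := Finset.prod_ite_mem _ _ _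
      _ = (1 - p) ^ s.card := by rw [Finset.univ_inter, Finset.prod_const]
  -- per-pair bound
  set S : Finset (Fin m) → Finset (Fin m) → Set (Fin m × Fin m → Bool) :=
    fun X Y => {ω | 3 * (m : ℝ) ^ 2 / d ≤ (X.card : ℝ) * (Y.card : ℝ) ∧
      ∀ x ∈ X, ∀ y ∈ Y, ω (x, y) = false} with hS
  have hterm : ∀ X Y : Finset (Fin m), μ (S X Y) ≤ (8 : ℝ≥0∞)⁻¹ ^ m := by
    intro X Y
    by_cases hc : 3 * (m : ℝ) ^ 2 / d ≤ (X.card : ℝ) * (Y.card : ℝ)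
    · have hsub : S X Y ⊆ {ω : Fin m × Fin m → Bool | ∀ i ∈ X ×ˢ Y, ω i = false} := by
        intro ω hω i hi
        rw [Finset.mem_product] at hi
        exact hω.2 i.1 hi.1 i.2 hi.2
      have hb : μ (S X Y) ≤ (1 - p) ^ (X.card * Y.card) := by
        calc μ (S X Y) ≤ μ {ω : Fin m × Fin m → Bool | ∀ i ∈ X ×ˢ Y, ω i = false} :=
              measure_mono hsub
          _ = (1 - p) ^ (X ×ˢ Y).card := cyl _
          _ = (1 - p) ^ (X.card * Y.card) := by rw [Finset.card_product]
      refine hb.trans ?_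
      have hq0 : (0 : ℝ) ≤ d / m := div_nonneg hd.le hm'.le
      have hq1 : d / m ≤ 1 := (div_le_one hm').mpr hdm
      have h1p : 1 - p = ENNReal.ofReal (1 - d / m) := by
        rw [hp, ENNReal.ofReal_sub _ hq0, ENNReal.ofReal_one]
      rw [h1p, ← ENNReal.ofReal_pow (by linarith)]
      have hcast : 3 * (m : ℝ) ^ 2 / d ≤ ((X.card * Y.card : ℕ) : ℝ) := by
        push_cast; exact hc
      calc ENNReal.ofReal ((1 - d / m) ^ (X.card * Y.card))
          ≤ ENNReal.ofReal ((8 : ℝ)⁻¹ ^ m) :=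
            ENNReal.ofReal_le_ofReal (realbound m hm d hd hdm _ hcast)
        _ = (8 : ℝ≥0∞)⁻¹ ^ m := by
            rw [ENNReal.ofReal_pow (by norm_num), ENNReal.ofReal_inv_of_pos (by norm_num)]
            norm_num
    · have : S X Y = ∅ := by
        ext ω; simp only [hS, Set.mem_setOf_eq, Set.mem_empty_iff_false, iff_false]
        intro h; exact hc h.1
      simp [this]
  -- union bound
  have hsub : {ω : Fin m × Fin m → Bool |
      ∃ X Y : Finset (Fin m),
        3 * (m : ℝ) ^ 2 / d ≤ (X.card : ℝ) * (Y.card : ℝ) ∧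
        ∀ x ∈ X, ∀ y ∈ Y, ω (x, y) = false} ⊆ ⋃ X, ⋃ Y, S X Y := by
    intro ω hω
    obtain ⟨X, Y, h1, h2⟩ := hω
    exact Set.mem_iUnion.mpr ⟨X, Set.mem_iUnion.mpr ⟨Y, h1, h2⟩⟩
  calc μ _ ≤ μ (⋃ X, ⋃ Y, S X Y) := measure_mono hsub
    _ ≤ ∑' X : Finset (Fin m), μ (⋃ Y, S X Y) := measure_iUnion_le _
    _ ≤ ∑' X : Finset (Fin m), ∑' Y : Finset (Fin m), μ (S X Y) :=
        ENNReal.tsum_le_tsum fun X => measure_iUnion_le _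
    _ ≤ ∑' _ : Finset (Fin m), ∑' _ : Finset (Fin m), (8 : ℝ≥0∞)⁻¹ ^ m :=
        ENNReal.tsum_le_tsum fun X => ENNReal.tsum_le_tsum fun Y => hterm X Y
    _ = (2 : ℝ≥0∞) ^ m * ((2 : ℝ≥0∞) ^ m * (8 : ℝ≥0∞)⁻¹ ^ m) := by
        rw [tsum_fintype, tsum_fintype]
        simp only [Finset.sum_const, Finset.card_univ, Fintype.card_finset,
          Fintype.card_fin, nsmul_eq_mul, Nat.cast_pow, Nat.cast_ofNat]
    _ = (2 * (2 * 8⁻¹) : ℝ≥0∞) ^ m := by rw [mul_pow, mul_pow]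
    _ = (2⁻¹ : ℝ≥0∞) ^ m := by
        congr 1
        have h2 : (2 : ℝ≥0∞) * 2⁻¹ = 1 :=
          ENNReal.mul_inv_cancel (by norm_num) (by norm_num)
        have h8 : (8 : ℝ≥0∞)⁻¹ = 2⁻¹ * (2⁻¹ * 2⁻¹) := by
          rw [show (8 : ℝ≥0∞) = 2 * (2 * 2) by norm_num,
            ENNReal.mul_inv (by norm_num) (by norm_num),
            ENNReal.mul_inv (by norm_num) (by norm_num)]
        calc (2 : ℝ≥0∞) * (2 * 8⁻¹) = (2 * 2⁻¹) * ((2 * 2⁻¹) * 2⁻¹) := by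
              rw [h8]; ring
          _ = 2⁻¹ := by rw [h2, one_mul, one_mul]
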